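/- Let X be a compact Hausdorff space, F a Banach lattice, and T : C(X) → F a disjointness preserving linear operator. Then the singularity set of T is finite. -/

import Mathlib

variable {X : Type*} [TopologicalSpace X] [CompactSpace X] [T2Space X]
  {F : Type*} [NormedAddCommGroup F] [Lattice F] [HasSolidNorm F] [IsOrderedAddMonoid F] [NormedSpace ℝ F] [CompleteSpace F]

/-- The closed ideal of `C(X)` of functions vanishing off the open set `U`. -/
def KU (U : Set X) : Set C(X, ℝ) := {f : C(X, ℝ) | ∀ x ∉ U, f x = 0}

/-- The singularity set of `T`: the points `x` such that for every open neighborhood `U`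
of `x`, the restriction of `T` to `K_U` is unbounded (discontinuous). -/
def SingSet (T : C(X, ℝ) →ₗ[ℝ] F) : Set X :=
  {x : X | ∀ U : Set X, IsOpen U → x ∈ U →
    ¬∃ C : ℝ, ∀ f ∈ KU U, ‖T f‖ ≤ C * ‖f‖}

/-- In a lattice-ordered group, if `|a| ⊓ |b| = 0` then `|a| ≤ |a + b|`. -/
lemma abs_le_abs_add_of_inf_abs_eq_zero {a b : F} (h : |a| ⊓ |b| = 0) :
    |a| ≤ |a + b| := by
  have h1 : |a| - |a + b| ≤ |a| := sub_le_self _ (abs_nonneg _)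
  have h2 : |a| ≤ |a + b| + |b| := by
    have := abs_add_le (a + b) (-b)
    simpa using this
  have h3 : |a| - |a + b| ≤ |b| := sub_le_iff_le_add'.mpr h2
  have h4 : |a| - |a + b| ≤ 0 := h ▸ le_inf h1 h3
  exact sub_nonpos.mp h4

/-- If the singularity set is infinite, there is a sequence of pairwise disjoint open sets,
on each of which the restriction of `T` is unbounded. -/
lemma exists_disjoint_unbounded (T : C(X, ℝ) →ₗ[ℝ] F) (hinf : (SingSet T).Infinite) :
    ∃ V : ℕ → Set X, (∀ m n, m ≠ n → Disjoint (V m) (V n)) ∧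
      ∀ n, ∀ C : ℝ, ∃ f ∈ KU (V n), C * ‖f‖ < ‖T f‖ := by
  obtain ⟨z, hz⟩ := hinf.exists_accPt_principal
  rw [accPt_iff_nhds] at hz
  have step : ∀ W : Set X, IsOpen W → z ∈ W →
      ∃ q : Set X × Set X, IsOpen q.1 ∧ IsOpen q.2 ∧ q.1 ⊆ W ∧ q.2 ⊆ W ∧ z ∈ q.2 ∧
        Disjoint q.1 q.2 ∧ ∃ x ∈ SingSet T, x ∈ q.1 := by
    intro W hW hzW
    obtain ⟨y, ⟨hyW, hyS⟩, hyz⟩ := hz W (hW.mem_nhds hzW)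
    obtain ⟨A0, B0, hA0, hB0, hyA0, hzB0, hAB⟩ := t2_separation hyz
    exact ⟨(A0 ∩ W, B0 ∩ W), hA0.inter hW, hB0.inter hW, Set.inter_subset_right,
      Set.inter_subset_right, ⟨hzB0, hzW⟩,
      hAB.mono Set.inter_subset_left Set.inter_subset_left, y, hyS, hyA0, hyW⟩
  choose q hAo hBo hAs hBs hzB hdisj x hxS hxA using step
  let Wrec : ℕ → {W : Set X // IsOpen W ∧ z ∈ W} := fun n =>
    Nat.rec ⟨Set.univ, isOpen_univ, Set.mem_univ z⟩
      (fun _ W => ⟨(q W.1 W.2.1 W.2.2).2, hBo _ _ _, hzB _ _ _⟩) n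
  set V : ℕ → Set X := fun n => (q (Wrec n).1 (Wrec n).2.1 (Wrec n).2.2).1 with hV
  have hWsucc : ∀ n, (Wrec (n + 1)).1 ⊆ (Wrec n).1 := fun n => hBs _ _ _
  have hWmono : ∀ m n, m ≤ n → (Wrec n).1 ⊆ (Wrec m).1 := by
    intro m n hmn
    induction n with
    | zero => simp_all
    | succ k ih =>
      rcases Nat.lt_or_ge m (k + 1) with h | h
      · exact (hWsucc k).trans (ih (Nat.lt_succ_iff.mp h))
      · have : m = k + 1 := le_antisymm (by omega) h
        subst this; rfl
  have hVsub : ∀ n, V n ⊆ (Wrec n).1 := fun n => hAs _ _ _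
  have hVdisjW : ∀ n, Disjoint (V n) ((Wrec (n + 1)).1) := fun n => hdisj _ _ _
  have hdisjlt : ∀ m n, m < n → Disjoint (V m) (V n) := by
    intro m n hmn
    exact (hVdisjW m).mono_right ((hVsub n).trans (hWmono (m + 1) n hmn))
  refine ⟨V, fun m n hmn => ?_, fun n C => ?_⟩
  · rcases hmn.lt_or_gt with h | h
    · exact hdisjlt m n h
    · exact (hdisjlt n m h).symm
  · have hs := hxS (Wrec n).1 (Wrec n).2.1 (Wrec n).2.2
    have := hs (V n) (hAo _ _ _) (hxA _ _ _)
    push_neg at this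
    obtain ⟨f, hf, hlt⟩ := this C
    exact ⟨f, hf, hlt⟩

/-- The singularity set of a disjointness preserving operator on `C(X)` is finite. -/
theorem singset_finite (T : C(X, ℝ) →ₗ[ℝ] F)
    (hdp : ∀ f g : C(X, ℝ), f * g = 0 → |T f| ⊓ |T g| = 0) :
    (SingSet T).Finite := by
  by_contra hinf
  rw [← Set.not_infinite, not_not] at hinf
  obtain ⟨V, hVdisj, hVunb⟩ := exists_disjoint_unbounded T hinf
  -- choose badly-behaved functions in each `KU (V n)`
  have key : ∀ n : ℕ, ∃ g : C(X, ℝ), g ∈ KU (V n) ∧ ‖g‖ = (2 : ℝ)⁻¹ ^ n ∧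
      ((n : ℝ) + 1) < ‖T g‖ := by
    intro n
    obtain ⟨f, hf, hlt⟩ := hVunb n (((n : ℝ) + 1) * 2 ^ n)
    have hfne : ‖f‖ ≠ 0 := by
      intro h0
      rw [h0, mul_zero] at hlt
      have : f = 0 := norm_eq_zero.mp h0
      rw [this, map_zero, norm_zero] at hlt
      exact lt_irrefl 0 hlt
    have hfpos : 0 < ‖f‖ := lt_of_le_of_ne (norm_nonneg f) (Ne.symm hfne)
    set c : ℝ := (2 : ℝ)⁻¹ ^ n / ‖f‖ with hc
    have hcpos : 0 < c := div_pos (by positivity) hfpos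
    refine ⟨c • f, fun x hx => ?_, ?_, ?_⟩
    · show c • f x = 0
      rw [hf x hx, smul_zero]
    · have h5 : ‖c • f‖ = ‖c‖ * ‖f‖ := norm_smul c f
      rw [h5, Real.norm_eq_abs, abs_of_pos hcpos, hc, div_mul_cancel₀ _ hfne]
    · have h5 : ‖c • T f‖ = ‖c‖ * ‖T f‖ := norm_smul c (T f)
      rw [map_smul, h5, Real.norm_eq_abs, abs_of_pos hcpos, hc, div_mul_eq_mul_div]
      rw [lt_div_iff₀ hfpos]
      calc ((n : ℝ) + 1) * ‖f‖ = (2 : ℝ)⁻¹ ^ n * (((n : ℝ) + 1) * 2 ^ n * ‖f‖) := by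
            field_simp
            rw [← mul_pow]; norm_num
        _ < (2 : ℝ)⁻¹ ^ n * ‖T f‖ := by
            apply mul_lt_mul_of_pos_left hlt (by positivity)
  choose g hgK hgnorm hgT using key
  have hsummable : Summable g := by
    apply Summable.of_norm
    simp only [hgnorm]
    exact summable_geometric_of_lt_one (by norm_num) (by norm_num)
  set h : C(X, ℝ) := ∑' n, g n with hh
  have happly : ∀ y : X, h y = ∑' n, g n y := by
    intro y
    have := (ContinuousMap.evalCLM ℝ y).map_tsum hsummable
    simpa using this
  have habs : ∀ n, |T (g n)| ≤ |T h| := by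
    intro n
    have hzero : g n * (h - g n) = 0 := by
      ext y
      simp only [ContinuousMap.mul_apply, ContinuousMap.sub_apply, ContinuousMap.zero_apply]
      by_cases hy : y ∈ V n
      · have : h y = g n y := by
          rw [happly y]
          apply tsum_eq_single
          intro k hk
          exact hgK k y (Set.disjoint_left.mp (hVdisj k n hk) · hy)
        rw [this, sub_self, mul_zero]
      · rw [hgK n y hy, zero_mul]
    have hdisjT := hdp _ _ hzero
    have hsum : T h = T (g n) + T (h - g n) := by
      rw [← map_add]
      congr 1
      abel
    rw [hsum]
    exact abs_le_abs_add_of_inf_abs_eq_zero hdisjT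
  have hnorm : ∀ n : ℕ, ((n : ℝ) + 1) < ‖T h‖ := by
    intro n
    calc ((n : ℝ) + 1) < ‖T (g n)‖ := hgT n
      _ ≤ ‖T h‖ := HasSolidNorm.solid (by simpa using habs n)
  obtain ⟨n, hn⟩ := exists_nat_gt ‖T h‖
  exact absurd (hnorm n) (by push_neg; linarith)
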